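/- arXiv:1405.5329 — 8 statements merged into one kernel-verified Lean document; each statement's English description precedes it below -/
import Mathlib

section
/- Let f_s > 0 and let F ⊆ ℝ be a bounded measurable set that is aliasing-free with respect to f_s. Then the Lebesgue measure of F is at most f_s. -/
open MeasureTheory

/-- **Proposition 2.** A bounded measurable set that is aliasing-free with respect to
sampling frequency `fs` has Lebesgue measure at most `fs`. -/
theorem bounded_aliasing_free_measure_le (fs : ℝ) (hfs : 0 < fs)
    (F : Set ℝ) (hF : MeasurableSet F) (hFb : Bornology.IsBounded F)
    (haf : ∀ n : ℤ, n ≠ 0 → volume (F ∩ ((fun x => x + (n : ℝ) * fs) '' F)) = 0) :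
    volume F ≤ ENNReal.ofReal fs := by
  -- image of F under translation equals a preimage
  have himg : ∀ c : ℝ, (fun x => x + c) '' F = (fun x => x + (-c)) ⁻¹' F := by
    intro c
    ext y
    constructor
    · rintro ⟨x, hx, rfl⟩
      simpa using hx
    · intro h
      exact ⟨y + -c, h, by ring⟩
  -- the slices of F
  set B : ℤ → Set ℝ := fun k => F ∩ Set.Ico ((k : ℝ) * fs) ((k + 1 : ℝ) * fs) with hB
  have hBmeas : ∀ k, MeasurableSet (B k) := fun k => hF.inter measurableSet_Ico
  have hBdisj : Pairwise (Function.onFun Disjoint B) := by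
    intro j k hjk
    refine Set.disjoint_left.mpr ?_
    rintro x ⟨-, hxj⟩ ⟨-, hxk⟩
    apply hjk
    have h1 : (j : ℝ) * fs < ((k : ℝ) + 1) * fs := lt_of_le_of_lt hxj.1 hxk.2
    have h2 : (k : ℝ) * fs < ((j : ℝ) + 1) * fs := lt_of_le_of_lt hxk.1 hxj.2
    have h1' : (j : ℝ) < (k : ℝ) + 1 := lt_of_mul_lt_mul_right h1 hfs.le
    have h2' : (k : ℝ) < (j : ℝ) + 1 := lt_of_mul_lt_mul_right h2 hfs.le
    have hjk1 : j < k + 1 := by exact_mod_cast h1'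
    have hkj1 : k < j + 1 := by exact_mod_cast h2'
    omega
  have hBcover : F = ⋃ k, B k := by
    ext x
    simp only [Set.mem_iUnion, hB, Set.mem_inter_iff, Set.mem_Ico]
    constructor
    · intro hx
      refine ⟨⌊x / fs⌋, hx, ?_, ?_⟩
      · have := Int.floor_le (x / fs)
        calc (⌊x / fs⌋ : ℝ) * fs ≤ (x / fs) * fs := by nlinarith
          _ = x := by field_simp
      · have := Int.lt_floor_add_one (x / fs)
        calc x = (x / fs) * fs := by field_simp
          _ < ((⌊x / fs⌋ : ℝ) + 1) * fs := by nlinarith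
    · rintro ⟨k, hx, -⟩; exact hx
  have hsum : volume F = ∑' k : ℤ, volume (B k) := by
    rw [hBcover, measure_iUnion hBdisj hBmeas]
  -- translated slices inside [0, fs)
  set A : ℤ → Set ℝ := fun k => (fun x => x + (k : ℝ) * fs) ⁻¹' (B k) with hA
  have hAvol : ∀ k, volume (A k) = volume (B k) := by
    intro k
    exact measure_preimage_add_right volume _ _
  have hAsub : ∀ k, A k ⊆ Set.Ico 0 fs := by
    intro k y hy
    have h2 : y + (k : ℝ) * fs ∈ Set.Ico ((k : ℝ) * fs) ((k + 1 : ℝ) * fs) := hy.2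
    constructor
    · linarith [h2.1]
    · have := h2.2; nlinarith [this]
  have hAmeas : ∀ k, MeasurableSet (A k) :=
    fun k => (hBmeas k).preimage (measurable_add_const _)
  have hAdisj : Pairwise (Function.onFun (AEDisjoint volume) A) := by
    intro j k hjk
    have hsub : A j ∩ A k ⊆
        (fun x => x + (j : ℝ) * fs) ⁻¹' (F ∩ ((fun x => x + ((j - k : ℤ) : ℝ) * fs) '' F)) := by
      rintro y ⟨hyj, hyk⟩
      have hjF : y + (j : ℝ) * fs ∈ F := hyj.1
      have hkF : y + (k : ℝ) * fs ∈ F := hyk.1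
      refine ⟨hjF, ⟨y + (k : ℝ) * fs, hkF, ?_⟩⟩
      push_cast
      ring
    have h0 : volume ((fun x => x + (j : ℝ) * fs) ⁻¹'
        (F ∩ ((fun x => x + ((j - k : ℤ) : ℝ) * fs) '' F))) = 0 := by
      rw [measure_preimage_add_right]
      exact haf (j - k) (sub_ne_zero.mpr hjk)
    exact measure_mono_null hsub h0
  calc volume F = ∑' k : ℤ, volume (B k) := hsum
    _ = ∑' k : ℤ, volume (A k) := by simp_rw [hAvol]
    _ = volume (⋃ k, A k) :=
        (measure_iUnion₀ hAdisj fun k => (hAmeas k).nullMeasurableSet).symm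
    _ ≤ volume (Set.Ico 0 fs) := measure_mono (Set.iUnion_subset hAsub)
    _ = ENNReal.ofReal fs := by rw [Real.volume_Ico, sub_zero]
end

section
/- Let f_s > 0, let F ⊆ ℝ be a measurable set that is aliasing-free with respect to f_s, and let S : ℝ → [0, ∞] be measurable. Then ∫_F S(f) df ≤ ∫_{(−f_s/2, f_s/2]} sup_{k∈ℤ} S(f − f_s·k) df, where the integrals are Lebesgue integrals with values in [0, ∞]. -/
open MeasureTheory
open scoped ENNReal

/-- Upper-bound direction of equation (16) in Theorem 2: the integral of a nonnegative
spectral density `S` over an aliasing-free set is at most the integral over one period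
of the supremum over all aliases. -/
theorem lintegral_aliasing_free_le_lintegral_sup (fs : ℝ) (hfs : 0 < fs)
    (F : Set ℝ) (hF : MeasurableSet F)
    (haf : ∀ n : ℤ, n ≠ 0 → volume (F ∩ ((fun x => x + (n : ℝ) * fs) '' F)) = 0)
    (S : ℝ → ℝ≥0∞) (hS : Measurable S) :
    ∫⁻ f in F, S f ∂volume
      ≤ ∫⁻ f in Set.Ioc (-(fs / 2)) (fs / 2), ⨆ k : ℤ, S (f - fs * k) ∂volume := by
  set I : Set ℝ := Set.Ioc (-(fs / 2)) (fs / 2) with hI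
  -- translated sets
  set A : ℤ → Set ℝ := fun k => (fun x => x + (k : ℝ) * fs) ⁻¹' F with hA
  have hAme : ∀ k : ℤ, MeasurableSet (A k) := fun k =>
    hF.preimage (measurable_add_const _)
  -- cover of ℝ by translated intervals
  set T : ℤ → Set ℝ := fun k =>
    Set.Ioc (-(fs / 2) + (k : ℝ) * fs) (fs / 2 + (k : ℝ) * fs) with hT
  have hTme : ∀ k, MeasurableSet (T k) := fun _ => measurableSet_Ioc
  have hcover : (⋃ k : ℤ, T k) = Set.univ := by
    have h := iUnion_Ioc_add_zsmul hfs (-(fs / 2))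
    rw [← h]
    refine Set.iUnion_congr fun k => ?_
    rw [hT]
    simp only [zsmul_eq_mul]
    push_cast
    ring_nf
  have hdisj : Pairwise (Function.onFun Disjoint T) := by
    have key : ∀ i j : ℤ, i < j → Disjoint (T i) (T j) := by
      intro i j hij
      rw [hT, Set.Ioc_disjoint_Ioc]
      have h1 : (i : ℝ) + 1 ≤ (j : ℝ) := by exact_mod_cast hij
      have : fs / 2 + (i : ℝ) * fs ≤ -(fs / 2) + (j : ℝ) * fs := by
        nlinarith
      calc min (fs / 2 + (i : ℝ) * fs) (fs / 2 + (j : ℝ) * fs)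
          ≤ fs / 2 + (i : ℝ) * fs := min_le_left _ _
        _ ≤ -(fs / 2) + (j : ℝ) * fs := this
        _ ≤ max (-(fs / 2) + (i : ℝ) * fs) (-(fs / 2) + (j : ℝ) * fs) := le_max_right _ _
    intro i j hij
    rcases lt_or_gt_of_ne hij with h | h
    · exact key i j h
    · exact (key j i h).symm
  -- decompose F
  have hFdecomp : F = ⋃ k : ℤ, F ∩ T k := by
    rw [← Set.inter_iUnion, hcover, Set.inter_univ]
  have step1 : ∫⁻ f in F, S f ∂volume = ∑' k : ℤ, ∫⁻ f in F ∩ T k, S f ∂volume := by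
    conv_lhs => rw [hFdecomp]
    exact lintegral_iUnion (fun k => hF.inter (hTme k))
      (fun i j hij => ((hdisj hij).mono (Set.inter_subset_right) (Set.inter_subset_right))) _
  -- translate each piece
  have step2 : ∀ k : ℤ, ∫⁻ f in F ∩ T k, S f ∂volume
      = ∫⁻ x, (A k ∩ I).indicator (fun x => S (x + (k : ℝ) * fs)) x ∂volume := by
    intro k
    rw [← lintegral_indicator (hF.inter (hTme k))]
    rw [← lintegral_add_right_eq_self (fun x => (F ∩ T k).indicator S x) ((k : ℝ) * fs)]
    congr 1
    ext x
    by_cases hx : x ∈ A k ∩ I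
    · have hx' : x + (k : ℝ) * fs ∈ F ∩ T k := by
        obtain ⟨h1, h2⟩ := hx
        refine ⟨h1, ?_⟩
        simp only [hT, Set.mem_Ioc] at *
        constructor <;> [linarith [h2.1]; linarith [h2.2]]
      rw [Set.indicator_of_mem hx', Set.indicator_of_mem hx]
    · have hx' : x + (k : ℝ) * fs ∉ F ∩ T k := by
        intro hc
        apply hx
        obtain ⟨h1, h2⟩ := hc
        refine ⟨h1, ?_⟩
        simp only [hT, Set.mem_Ioc, hI] at *
        constructor <;> [linarith [h2.1]; linarith [h2.2]]
      rw [Set.indicator_of_notMem hx', Set.indicator_of_notMem hx]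
  -- the a.e. bound
  have hnull : volume (⋃ j : ℤ, ⋃ k : ℤ, ⋃ (_ : j ≠ k), A j ∩ A k) = 0 := by
    refine measure_iUnion_null fun j => measure_iUnion_null fun k => measure_iUnion_null fun hjk => ?_
    have hn : (j : ℤ) - k ≠ 0 := sub_ne_zero.mpr hjk
    have hsub : A j ∩ A k ⊆
        (fun x => x + (j : ℝ) * fs) ⁻¹' (F ∩ ((fun x => x + ((j - k : ℤ) : ℝ) * fs) '' F)) := by
      intro x ⟨hxj, hxk⟩
      refine ⟨hxj, ⟨x + (k : ℝ) * fs, hxk, ?_⟩⟩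
      push_cast
      ring
    refine measure_mono_null hsub ?_
    rw [measure_preimage_add_right]
    exact haf _ hn
  have hbound : ∀ᵐ x ∂volume,
      ∑' k : ℤ, (A k ∩ I).indicator (fun x => S (x + (k : ℝ) * fs)) x
        ≤ I.indicator (fun x => ⨆ k : ℤ, S (x - fs * k)) x := by
    filter_upwards [measure_eq_zero_iff_ae_notMem.mp hnull] with x hx
    simp only [Set.mem_iUnion, not_exists] at hx
    by_cases hxI : x ∈ I
    · rw [Set.indicator_of_mem hxI]
      by_cases hex : ∃ k₀ : ℤ, x ∈ A k₀
      · obtain ⟨k₀, hk₀⟩ := hex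
        have hzero : ∀ k : ℤ, k ≠ k₀ →
            (A k ∩ I).indicator (fun x => S (x + (k : ℝ) * fs)) x = 0 := by
          intro k hk
          rw [Set.indicator_of_notMem]
          intro ⟨hk', _⟩
          exact hx k k₀ hk ⟨hk', hk₀⟩
        rw [tsum_eq_single k₀ hzero]
        calc (A k₀ ∩ I).indicator (fun x => S (x + (k₀ : ℝ) * fs)) x
            ≤ S (x + (k₀ : ℝ) * fs) := Set.indicator_le_self _ _ x
          _ = S (x - fs * ((-k₀ : ℤ) : ℝ)) := by congr 1; push_cast; ring
          _ ≤ ⨆ k : ℤ, S (x - fs * k) := le_iSup (fun k : ℤ => S (x - fs * k)) (-k₀)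
      · push_neg at hex
        have : ∀ k : ℤ, (A k ∩ I).indicator (fun x => S (x + (k : ℝ) * fs)) x = 0 := by
          intro k
          exact Set.indicator_of_notMem (fun hmem => hex k hmem.1) _
        simp [this]
    · rw [Set.indicator_of_notMem hxI]
      have : ∀ k : ℤ, (A k ∩ I).indicator (fun x => S (x + (k : ℝ) * fs)) x = 0 := by
        intro k
        exact Set.indicator_of_notMem (fun hmem => hxI hmem.2) _
      simp [this]
  calc ∫⁻ f in F, S f ∂volume
      = ∑' k : ℤ, ∫⁻ x, (A k ∩ I).indicator (fun x => S (x + (k : ℝ) * fs)) x ∂volume := by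
        rw [step1]; exact tsum_congr step2
    _ = ∫⁻ x, ∑' k : ℤ, (A k ∩ I).indicator (fun x => S (x + (k : ℝ) * fs)) x ∂volume := by
        rw [← lintegral_tsum]
        intro k
        exact ((hS.comp (measurable_add_const _)).indicator
          (((hAme k).inter measurableSet_Ioc))).aemeasurable
    _ ≤ ∫⁻ x, I.indicator (fun x => ⨆ k : ℤ, S (x - fs * k)) x ∂volume :=
        lintegral_mono_ae hbound
    _ = ∫⁻ f in I, ⨆ k : ℤ, S (f - fs * k) ∂volume := by
        rw [lintegral_indicator measurableSet_Ioc]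
end

section
/- Let f_s > 0 and let S : ℝ → [0, ∞] be measurable. Then the supremum, over all bounded measurable sets F ⊆ ℝ that are aliasing-free with respect to f_s, of ∫_F S(f) df equals ∫_{(−f_s/2, f_s/2]} sup_{k∈ℤ} S(f − f_s·k) df. -/
open MeasureTheory
open scoped ENNReal

private lemma alias_key {fs : ℝ} (hfs : 0 < fs) {u v : ℝ} (k : ℤ)
    (hu : u ∈ Set.Ioc (-(fs/2)) (fs/2)) (hv : v ∈ Set.Ioc (-(fs/2)) (fs/2))
    (h : u = v + (k : ℝ) * fs) : k = 0 := by
  obtain ⟨hu1, hu2⟩ := hu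
  obtain ⟨hv1, hv2⟩ := hv
  have h1 : (k : ℝ) * fs < fs := by linarith
  have h2 : -fs < (k : ℝ) * fs := by linarith
  have hk1 : (k : ℝ) < 1 := by nlinarith
  have hk2 : (-1 : ℝ) < (k : ℝ) := by nlinarith
  have h3 : k < 1 := by exact_mod_cast hk1
  have h4 : (-1 : ℤ) < k := by exact_mod_cast hk2
  omega

private lemma alias_tile {fs : ℝ} (hfs : 0 < fs) (x : ℝ) :
    ∃ n : ℤ, x - (n : ℝ) * fs ∈ Set.Ioc (-(fs/2)) (fs/2) := by
  refine ⟨toIocDiv hfs (-(fs/2)) x, ?_⟩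
  have h := sub_toIocDiv_zsmul_mem_Ioc hfs (-(fs/2)) x
  rw [zsmul_eq_mul] at h
  have : -(fs/2) + fs = fs/2 := by ring
  rwa [this] at h

/-- Equation (16) together with Remark (i) after Theorem 2: the supremum over all bounded
measurable aliasing-free sets `F` of `∫_F S` equals the integral over one period of the
supremum of `S` over all aliases. -/
theorem iSup_lintegral_aliasing_free_eq (fs : ℝ) (hfs : 0 < fs)
    (S : ℝ → ℝ≥0∞) (hS : Measurable S) :
    (⨆ (F : Set ℝ) (_ : MeasurableSet F) (_ : Bornology.IsBounded F)
        (_ : ∀ n : ℤ, n ≠ 0 → volume (F ∩ ((fun x => x + (n : ℝ) * fs) '' F)) = 0),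
        ∫⁻ f in F, S f ∂volume)
      = ∫⁻ f in Set.Ioc (-(fs / 2)) (fs / 2), ⨆ k : ℤ, S (f - fs * k) ∂volume := by
  classical
  set I : Set ℝ := Set.Ioc (-(fs/2)) (fs/2) with hI
  have hImeas : MeasurableSet I := measurableSet_Ioc
  set M : ℝ → ℝ≥0∞ := fun f => ⨆ k : ℤ, S (f - fs * k) with hM
  have hMmeas : Measurable M :=
    Measurable.iSup fun k => hS.comp (measurable_id.sub_const _)
  refine le_antisymm ?_ ?_
  · -- (≤) direction
    refine iSup_le fun F => iSup_le fun hF => iSup_le fun _ => iSup_le fun hAF => ?_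
    set B : ℤ → Set ℝ := fun n => F ∩ {x | x - (n : ℝ) * fs ∈ I} with hB
    have hBmeas : ∀ n, MeasurableSet (B n) :=
      fun n => hF.inter (hImeas.preimage (measurable_id.sub_const _))
    have hBdisj : Pairwise (Function.onFun Disjoint B) := by
      intro n m hnm
      rw [Function.onFun, Set.disjoint_left]
      rintro x ⟨-, hxn⟩ ⟨-, hxm⟩
      exact hnm (by
        have := alias_key hfs (m - n) hxn hxm (by push_cast; ring)
        omega)
    have hBcover : (⋃ n : ℤ, B n) = F := by
      apply Set.Subset.antisymm
      · exact Set.iUnion_subset fun n => Set.inter_subset_left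
      · intro x hx
        obtain ⟨n, hn⟩ := alias_tile hfs x
        exact Set.mem_iUnion.2 ⟨n, hx, hn⟩
    set C : ℤ → Set ℝ := fun n => (fun x => x + (n : ℝ) * fs) ⁻¹' B n with hC
    have hCmeas : ∀ n, MeasurableSet (C n) :=
      fun n => (hBmeas n).preimage (measurable_add_const _)
    have hCsub : ∀ n, C n ⊆ I := by
      intro n x hx
      have : (x + (n : ℝ) * fs) - (n : ℝ) * fs ∈ I := hx.2
      simpa using this
    -- each piece
    have hpiece : ∀ n : ℤ, ∫⁻ f in B n, S f ∂volume ≤ ∫⁻ f in C n, M f ∂volume := by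
      intro n
      have hmp : MeasurePreserving (fun x : ℝ => x + (n : ℝ) * fs) volume volume :=
        measurePreserving_add_right volume _
      have hemb : MeasurableEmbedding (fun x : ℝ => x + (n : ℝ) * fs) :=
        (MeasurableEquiv.addRight ((n : ℝ) * fs)).measurableEmbedding
      have himg : (fun x : ℝ => x + (n : ℝ) * fs) '' C n = B n := by
        rw [hC]
        exact Set.image_preimage_eq _ fun y => ⟨y - (n : ℝ) * fs, by simp⟩
      calc ∫⁻ f in B n, S f ∂volume
          = ∫⁻ f in C n, S (f + (n : ℝ) * fs) ∂volume := by
            rw [hmp.setLIntegral_comp_emb hemb, himg]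
        _ ≤ ∫⁻ f in C n, M f ∂volume := by
            refine lintegral_mono fun f => ?_
            have : S (f + (n : ℝ) * fs) = S (f - fs * ((-n : ℤ) : ℝ)) := by
              congr 1; push_cast; ring
            rw [this]
            exact le_iSup (fun k : ℤ => S (f - fs * k)) (-n)
    -- sum up using withDensity
    set μ : Measure ℝ := volume.withDensity M with hμ
    have hμC : ∀ n, ∫⁻ f in C n, M f ∂volume = μ (C n) := by
      intro n; rw [hμ, withDensity_apply _ (hCmeas n)]
    have hAEdisj : Pairwise (Function.onFun (AEDisjoint μ) C) := by
      intro n m hnm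
      have hvol : volume (C n ∩ C m) = 0 := by
        have hsub : C n ∩ C m ⊆
            (fun x => x + (n : ℝ) * fs) ⁻¹'
              (F ∩ ((fun x => x + ((n - m : ℤ) : ℝ) * fs) '' F)) := by
          rintro x ⟨hxn, hxm⟩
          refine ⟨hxn.1, ⟨x + (m : ℝ) * fs, hxm.1, by push_cast; ring⟩⟩
        refine measure_mono_null hsub ?_
        rw [measure_preimage_add_right]
        exact hAF (n - m) (by omega)
      exact measure_mono_null (le_refl _) (by
        rw [hμ]
        exact (withDensity_absolutelyContinuous volume M) hvol)
    calc ∫⁻ f in F, S f ∂volume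
        = ∑' n : ℤ, ∫⁻ f in B n, S f ∂volume := by
          rw [← hBcover, lintegral_iUnion hBmeas hBdisj]
      _ ≤ ∑' n : ℤ, μ (C n) := ENNReal.tsum_le_tsum fun n => (hpiece n).trans_eq (hμC n)
      _ = μ (⋃ n : ℤ, C n) :=
          (measure_iUnion₀ hAEdisj fun n => (hCmeas n).nullMeasurableSet).symm
      _ ≤ μ I := measure_mono (Set.iUnion_subset hCsub)
      _ = ∫⁻ f in I, M f ∂volume := by rw [hμ, withDensity_apply _ hImeas]
  · -- (≥) direction
    set e : ℕ → ℤ := fun i => (Denumerable.eqv ℤ).symm i with he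
    have he_inj : Function.Injective e := (Denumerable.eqv ℤ).symm.injective
    set g : ℕ → ℝ → ℝ≥0∞ := fun i f => S (f - fs * (e i : ℝ)) with hg
    have hgmeas : ∀ i, Measurable (g i) := fun i => hS.comp (measurable_id.sub_const _)
    set G : ℕ → ℝ → ℝ≥0∞ := fun n f => ⨆ i ∈ Finset.range (n+1), g i f with hG
    have hGmeas : ∀ n, Measurable (G n) :=
      fun n => Measurable.iSup fun i => Measurable.iSup fun _ => hgmeas i
    have hGmono : Monotone G := by
      intro n m hnm f
      exact iSup₂_le fun i hi =>
        le_iSup₂ (f := fun i (_ : i ∈ Finset.range (m+1)) => g i f) i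
          (Finset.mem_range.2 (lt_of_lt_of_le (Finset.mem_range.1 hi) (by omega)))
    have hGsup : ∀ f, (⨆ n, G n f) = M f := by
      intro f
      apply le_antisymm
      · exact iSup_le fun n => iSup₂_le fun i _ =>
          le_iSup (fun k : ℤ => S (f - fs * k)) (e i)
      · refine iSup_le fun k => ?_
        refine le_iSup_of_le ((Denumerable.eqv ℤ) k) ?_
        have hek : e ((Denumerable.eqv ℤ) k) = k := (Denumerable.eqv ℤ).symm_apply_apply k
        have : S (f - fs * (k : ℝ)) = g ((Denumerable.eqv ℤ) k) f := by rw [hg]; simp [hek]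
        rw [this]
        exact le_iSup₂ (f := fun i (_ : i ∈ Finset.range ((Denumerable.eqv ℤ) k + 1)) => g i f)
          ((Denumerable.eqv ℤ) k) (Finset.self_mem_range_succ _)
    have hIint : ∫⁻ f in I, M f ∂volume = ⨆ n, ∫⁻ f in I, G n f ∂volume := by
      rw [← lintegral_iSup (fun n => hGmeas n) hGmono]
      exact lintegral_congr fun f => (hGsup f).symm
    rw [hIint]
    refine iSup_le fun n => ?_
    -- construct the partition of I
    set P : ℕ → Set ℝ := fun i =>
      (I ∩ {f | g i f = G n f}) ∩ ⋂ j ∈ Finset.range i, {f | g j f = G n f}ᶜ with hP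
    have hPmeas : ∀ i, MeasurableSet (P i) := by
      intro i
      refine ((hImeas.inter (measurableSet_eq_fun (hgmeas i) (hGmeas n))).inter
        (Finset.measurableSet_biInter _ fun j _ =>
          (measurableSet_eq_fun (hgmeas j) (hGmeas n)).compl))
    have hPsubI : ∀ i, P i ⊆ I := fun i x hx => hx.1.1
    have hPg : ∀ i, ∀ x ∈ P i, g i x = G n x := fun i x hx => hx.1.2
    have hPdisj : ∀ i j, i ≠ j → ∀ x, x ∈ P i → x ∈ P j → False := by
      intro i j hij x hxi hxj
      rcases lt_or_gt_of_ne hij with h | h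
      · exact (Set.mem_iInter₂.1 hxj.2 i (Finset.mem_range.2 h)) hxi.1.2
      · exact (Set.mem_iInter₂.1 hxi.2 j (Finset.mem_range.2 h)) hxj.1.2
    have hPcover : ∀ x ∈ I, ∃ i ∈ Finset.range (n+1), x ∈ P i := by
      intro x hx
      have hex : ∃ i, g i x = G n x ∧ i ≤ n := by
        obtain ⟨i, hi, hieq⟩ := Finset.exists_mem_eq_sup (Finset.range (n+1))
          Finset.nonempty_range_add_one (fun i => g i x)
        have hsup : (Finset.range (n+1)).sup (fun i => g i x) = G n x :=
          Finset.sup_eq_iSup _ _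
        exact ⟨i, hieq.symm.trans hsup, Nat.lt_succ_iff.1 (Finset.mem_range.1 hi)⟩
      set i₀ := Nat.find hex with hi₀
      obtain ⟨hspec1, hspec2⟩ := Nat.find_spec hex
      refine ⟨i₀, Finset.mem_range.2 (by omega), ⟨⟨hx, hspec1⟩, ?_⟩⟩
      refine Set.mem_iInter₂.2 fun j hj => ?_
      have hjlt : j < i₀ := Finset.mem_range.1 hj
      have := Nat.find_min hex hjlt
      intro hje
      exact this ⟨hje, by omega⟩
    have hPunion : (⋃ i ∈ Finset.range (n+1), P i) = I := by
      apply Set.Subset.antisymm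
      · exact Set.iUnion₂_subset fun i _ => hPsubI i
      · intro x hx
        obtain ⟨i, hi, hxi⟩ := hPcover x hx
        exact Set.mem_biUnion hi hxi
    -- translated sets
    set D : ℕ → Set ℝ := fun i => (fun x => x + fs * (e i : ℝ)) ⁻¹' P i with hD
    have hDmeas : ∀ i, MeasurableSet (D i) :=
      fun i => (hPmeas i).preimage (measurable_add_const _)
    have hDmem : ∀ i x, x ∈ D i ↔ x + fs * (e i : ℝ) ∈ P i := fun i x => Iff.rfl
    have hDdisj : ∀ i j, i ≠ j → ∀ x, x ∈ D i → x ∈ D j → False := by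
      intro i j hij x hxi hxj
      have hu : x + fs * (e i : ℝ) ∈ I := hPsubI i hxi
      have hv : x + fs * (e j : ℝ) ∈ I := hPsubI j hxj
      have hk : e i - e j = 0 :=
        alias_key hfs (e i - e j) hu hv (by push_cast; ring)
      have : e i = e j := by omega
      exact hij (he_inj this)
    set F : Set ℝ := ⋃ i ∈ Finset.range (n+1), D i with hF
    have hFmeas : MeasurableSet F := Finset.measurableSet_biUnion _ fun i _ => hDmeas i
    have hFbdd : Bornology.IsBounded F := by
      refine (Bornology.isBounded_biUnion (Finset.finite_toSet _)).2 fun i _ => ?_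
      have hsub : D i ⊆ Set.Ioc (-(fs/2) - fs * (e i : ℝ)) (fs/2 - fs * (e i : ℝ)) := by
        intro x hx
        have := hPsubI i hx
        exact ⟨by have := this.1; linarith, by have := this.2; linarith⟩
      exact (Metric.isBounded_Ioc _ _).subset hsub
    have hFaf : ∀ m : ℤ, m ≠ 0 → volume (F ∩ ((fun x => x + (m : ℝ) * fs) '' F)) = 0 := by
      intro m hm
      have : F ∩ ((fun x => x + (m : ℝ) * fs) '' F) = ∅ := by
        rw [Set.eq_empty_iff_forall_notMem]
        rintro x ⟨hx1, y, hy, hxy⟩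
        obtain ⟨i, -, hxi⟩ := Set.mem_iUnion₂.1 hx1
        obtain ⟨j, -, hyj⟩ := Set.mem_iUnion₂.1 hy
        have hu : x + fs * (e i : ℝ) ∈ I := hPsubI i hxi
        have hv : y + fs * (e j : ℝ) ∈ I := hPsubI j hyj
        have hk : e i - e j + m = 0 := by
          refine alias_key hfs (e i - e j + m) hu hv ?_
          push_cast
          rw [← hxy]; ring
        by_cases hij : i = j
        · subst hij
          have : m = 0 := by omega
          exact hm this
        · have hxeq : y + fs * (e j : ℝ) = x + fs * (e i : ℝ) := by
            rw [← hxy]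
            have : (e i : ℝ) = (e j : ℝ) - (m : ℝ) := by
              have : ((e i - e j + m : ℤ) : ℝ) = 0 := by rw [hk]; simp
              push_cast at this; linarith
            rw [this]; ring
          have hyPi : x + fs * (e i : ℝ) ∈ P j := hxeq ▸ hyj
          exact hPdisj i j hij _ hxi hyPi
      rw [this, measure_empty]
    -- compute the integral over F
    have hDint : ∀ i, ∫⁻ f in D i, S f ∂volume = ∫⁻ f in P i, G n f ∂volume := by
      intro i
      have hmp : MeasurePreserving (fun x : ℝ => x + fs * (e i : ℝ)) volume volume :=
        measurePreserving_add_right volume _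
      have hemb : MeasurableEmbedding (fun x : ℝ => x + fs * (e i : ℝ)) :=
        (MeasurableEquiv.addRight (fs * (e i : ℝ))).measurableEmbedding
      have himg : (fun x : ℝ => x + fs * (e i : ℝ)) '' D i = P i := by
        rw [hD]
        exact Set.image_preimage_eq _ fun y => ⟨y - fs * (e i : ℝ), by simp⟩
      calc ∫⁻ f in D i, S f ∂volume
          = ∫⁻ y in P i, S (y - fs * (e i : ℝ)) ∂volume := by
            have key := hmp.setLIntegral_comp_emb hemb
              (fun y => S (y - fs * (e i : ℝ))) (D i)
            rw [himg] at key
            rw [← key]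
            refine lintegral_congr fun x => ?_
            simp
        _ = ∫⁻ y in P i, G n y ∂volume := by
            refine setLIntegral_congr_fun (hPmeas i) ?_
            exact fun x hx => hPg i x hx
    calc ∫⁻ f in I, G n f ∂volume
        = ∫⁻ f in ⋃ i ∈ Finset.range (n+1), P i, G n f ∂volume := by rw [hPunion]
      _ = ∑ i ∈ Finset.range (n+1), ∫⁻ f in P i, G n f ∂volume := by
          refine lintegral_biUnion_finset ?_ (fun i _ => hPmeas i) _
          intro i hi j hj hij
          rw [Function.onFun, Set.disjoint_left]
          exact fun x hxi hxj => hPdisj i j hij x hxi hxj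
      _ = ∑ i ∈ Finset.range (n+1), ∫⁻ f in D i, S f ∂volume := by
          exact Finset.sum_congr rfl fun i _ => (hDint i).symm
      _ = ∫⁻ f in F, S f ∂volume := by
          rw [hF]
          refine (lintegral_biUnion_finset ?_ (fun i _ => hDmeas i) _).symm
          intro i hi j hj hij
          rw [Function.onFun, Set.disjoint_left]
          exact fun x hxi hxj => hDdisj i j hij x hxi hxj
      _ ≤ _ := by
          refine le_iSup_of_le F ?_
          refine le_iSup_of_le hFmeas ?_
          refine le_iSup_of_le hFbdd ?_
          exact le_iSup_of_le hFaf le_rfl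
end

section
/- Let x, y : ℤ → [0, ∞] satisfy 0 < y(k) < ∞ for every k ∈ ℤ. Then the supremum of Σ_{k∈ℤ} x(k)·h(k), taken over all h : ℤ → [0, ∞] with Σ_{k∈ℤ} y(k)·h(k) = 1, equals sup_{k∈ℤ} x(k)/y(k), where sums and arithmetic are in the extended nonnegative reals. -/
open scoped ENNReal

/-- The optimization lemma from Appendix B: maximizing `∑ₖ x k * h k` over nonnegative
coefficients `h` normalized by `∑ₖ y k * h k = 1` yields the maximal ratio
`⨆ₖ x k / y k`. -/
theorem iSup_tsum_linear_eq_iSup_ratio (x y : ℤ → ℝ≥0∞)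
    (hy : ∀ k : ℤ, 0 < y k ∧ y k < ∞) :
    (⨆ (h : ℤ → ℝ≥0∞) (_ : ∑' k : ℤ, y k * h k = 1), ∑' k : ℤ, x k * h k)
      = ⨆ k : ℤ, x k / y k := by
  apply le_antisymm
  · refine iSup₂_le fun h hh => ?_
    calc ∑' k : ℤ, x k * h k
        = ∑' k : ℤ, (x k / y k) * (y k * h k) := by
          refine tsum_congr fun k => ?_
          rw [← mul_assoc, ENNReal.div_mul_cancel (hy k).1.ne' (hy k).2.ne]
      _ ≤ ∑' k : ℤ, (⨆ j : ℤ, x j / y j) * (y k * h k) := by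
          refine ENNReal.tsum_le_tsum fun k => ?_
          exact mul_le_mul_left (le_iSup (fun j => x j / y j) k) _
      _ = (⨆ j : ℤ, x j / y j) * ∑' k : ℤ, y k * h k := ENNReal.tsum_mul_left
      _ = ⨆ j : ℤ, x j / y j := by rw [hh, mul_one]
  · refine iSup_le fun k => ?_
    set h : ℤ → ℝ≥0∞ := fun j => if j = k then (y k)⁻¹ else 0 with hdef
    have h1 : ∑' j : ℤ, y j * h j = 1 := by
      rw [tsum_eq_single k (fun b hb => by simp [hdef, hb])]
      simp [hdef, ENNReal.mul_inv_cancel (hy k).1.ne' (hy k).2.ne]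
    have h2 : ∑' j : ℤ, x j * h j = x k / y k := by
      rw [tsum_eq_single k (fun b hb => by simp [hdef, hb])]
      simp [hdef, div_eq_mul_inv]
    exact le_iSup_of_le h (by rw [iSup_pos h1, h2])
end

section
/- Let n ≥ 1, let λ₁, …, λ_n be nonnegative real numbers, let θ > 0, and set R = (1/2)·Σ_{i=1}^n max(log₂(λ_i/θ), 0). Then Σ_{i=1}^n min(λ_i, θ) ≥ 2^{−2R} · Σ_{i=1}^n λ_i. -/
open scoped BigOperators

/-- The eigenvalue inequality (40) from Example 2: reverse waterfilling over the
eigenvalues `l i` at water level `θ` beats the flat exponential rate-distortion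
tradeoff at the corresponding rate `R`. -/
theorem reverse_waterfilling_ge_flat (n : ℕ) (hn : 1 ≤ n)
    (l : Fin n → ℝ) (hl : ∀ i, 0 ≤ l i) (θ : ℝ) (hθ : 0 < θ) (R : ℝ)
    (hR : R = (1 / 2) * ∑ i, max (Real.logb 2 (l i / θ)) 0) :
    (∑ i, min (l i) θ) ≥ (2 : ℝ) ^ (-(2 * R)) * ∑ i, l i := by
  subst hR
  set r : Fin n → ℝ := fun i => max (Real.logb 2 (l i / θ)) 0 with hr
  have hr0 : ∀ i, 0 ≤ r i := fun i => le_max_right _ _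
  have key : ∀ i, (2:ℝ) ^ (-(2 * ((1/2:ℝ) * ∑ j, r j))) * l i ≤ min (l i) θ := by
    intro i
    have h2R : -(2 * ((1/2:ℝ) * ∑ j, r j)) = -(∑ j, r j) := by ring
    rw [h2R]
    rcases eq_or_lt_of_le (hl i) with h0 | h0
    · simp [← h0, le_min_iff, hθ.le]
    · have hpos : 0 < l i / θ := div_pos h0 hθ
      have hmin : min (l i) θ = l i * (2:ℝ) ^ (-(r i)) := by
        rcases le_or_gt (l i) θ with h | h
        · have hri : r i = 0 := by
            have : Real.logb 2 (l i / θ) ≤ 0 :=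
              Real.logb_nonpos (by norm_num) hpos.le ((div_le_one hθ).2 h)
            simp [hr, max_eq_right this]
          simp [hri, min_eq_left h]
        · have hri : r i = Real.logb 2 (l i / θ) := by
            apply max_eq_left
            exact Real.logb_nonneg (by norm_num) ((le_div_iff₀ hθ).2 (by linarith))
          rw [min_eq_right h.le, hri, Real.rpow_neg (by norm_num),
              Real.rpow_logb (by norm_num) (by norm_num) hpos]
          field_simp
      rw [hmin, mul_comm]
      apply mul_le_mul_of_nonneg_left _ (hl i)
      apply Real.rpow_le_rpow_of_exponent_le (by norm_num)
      have : r i ≤ ∑ j, r j := Finset.single_le_sum (fun j _ => hr0 j) (Finset.mem_univ i)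
      linarith
  calc (2:ℝ) ^ (-(2 * ((1/2:ℝ) * ∑ j, r j))) * ∑ i, l i
      = ∑ i, (2:ℝ) ^ (-(2 * ((1/2:ℝ) * ∑ j, r j))) * l i := by rw [Finset.mul_sum]
    _ ≤ ∑ i, min (l i) θ := Finset.sum_le_sum fun i _ => key i
end

section
/- Let S_n be an n×n positive definite complex matrix, let S be an n×n Hermitian complex matrix, and let H be an n×p complex matrix such that the p×p matrix Hᴴ·S_n·H is invertible (Hᴴ denotes conjugate transpose). Then the n×n matrix S·S_n⁻¹·S − S·H·(Hᴴ·S_n·H)⁻¹·Hᴴ·S is positive semidefinite. -/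
open Matrix
open scoped ComplexOrder

/-- The matrix inequality (99) of Appendix A.4: for `S_n` positive definite, `S`
Hermitian, and `H` with `Hᴴ Sₙ H` invertible,
`S Sₙ⁻¹ S − S H (Hᴴ Sₙ H)⁻¹ Hᴴ S` is positive semidefinite. -/
theorem matrix_filter_bank_inequality {n p : ℕ}
    (Sn : Matrix (Fin n) (Fin n) ℂ) (hSn : Sn.PosDef)
    (S : Matrix (Fin n) (Fin n) ℂ) (hS : S.IsHermitian)
    (H : Matrix (Fin n) (Fin p) ℂ) (hH : IsUnit (Hᴴ * Sn * H)) :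
    (S * Sn⁻¹ * S - S * H * (Hᴴ * Sn * H)⁻¹ * Hᴴ * S).PosSemidef := by
  set K : Matrix (Fin p) (Fin p) ℂ := Hᴴ * Sn * H with hK
  have hKdet : IsUnit K.det := (Matrix.isUnit_iff_isUnit_det K).mp hH
  have hSnH : Sn.IsHermitian := hSn.isHermitian
  have hKH : K.IsHermitian := by
    simp [hK, Matrix.IsHermitian, Matrix.conjTranspose_mul, Matrix.mul_assoc, hSnH.eq]
  have hKinvH : (K⁻¹).IsHermitian := hKH.inv
  have hSndet : IsUnit Sn.det := hSn.det_pos.ne'.isUnit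
  have hSninv : Sn⁻¹ * Sn = 1 := Matrix.nonsing_inv_mul Sn hSndet
  have hSninv' : Sn * Sn⁻¹ = 1 := Matrix.mul_nonsing_inv Sn hSndet
  have hKinv : K⁻¹ * K = 1 := Matrix.nonsing_inv_mul K hKdet
  set N : Matrix (Fin n) (Fin n) ℂ := Sn⁻¹ - H * K⁻¹ * Hᴴ with hN
  have hNH : Nᴴ = N := by
    simp [hN, Matrix.conjTranspose_sub, Matrix.conjTranspose_mul,
      hSnH.inv.eq, Matrix.mul_assoc, hKinvH.eq]
  have key : N * Sn * N = N := by
    have hQ : (H * K⁻¹ * Hᴴ) * Sn * (H * K⁻¹ * Hᴴ) = H * K⁻¹ * Hᴴ := by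
      have e : H * K⁻¹ * Hᴴ * Sn * (H * K⁻¹ * Hᴴ)
          = H * (K⁻¹ * (Hᴴ * Sn * H) * K⁻¹) * Hᴴ := by
        simp only [Matrix.mul_assoc]
      rw [e, ← hK, hKinv, Matrix.one_mul]
    have h1 : Sn⁻¹ * Sn * (H * K⁻¹ * Hᴴ) = H * K⁻¹ * Hᴴ := by
      rw [hSninv, Matrix.one_mul]
    have h2 : H * K⁻¹ * Hᴴ * Sn * Sn⁻¹ = H * K⁻¹ * Hᴴ := by
      rw [Matrix.mul_assoc (H * K⁻¹ * Hᴴ), hSninv', Matrix.mul_one]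
    simp only [hN, Matrix.sub_mul, Matrix.mul_sub, hSninv, hQ, h1, h2, Matrix.one_mul]
    abel
  have e1 : S * Sn⁻¹ * S - S * H * K⁻¹ * Hᴴ * S = S * N * S := by
    simp only [hN, Matrix.mul_sub, Matrix.sub_mul, Matrix.mul_assoc]
  have e2 : (S * N) * Sn * (S * N)ᴴ = S * N * S := by
    rw [Matrix.conjTranspose_mul, hNH, hS.eq]
    have e : S * N * Sn * (N * S) = S * ((N * Sn * N) * S) := by
      simp only [Matrix.mul_assoc]
    rw [e, key, ← Matrix.mul_assoc]
  rw [e1, ← e2]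
  exact hSn.posSemidef.mul_mul_conjTranspose_same (S * N)
end

section
/- Let S : ℝ → [0, ∞) be a nonnegative Lebesgue-integrable function, let f_s > 0, let F ⊆ ℝ be a measurable set whose Lebesgue measure is at most f_s, and let ε > 0. Then there exist a positive integer P and real numbers a₁, …, a_P such that the half-open intervals I_p = [a_p, a_p + f_s/P), p = 1, …, P, are pairwise disjoint and ∫_{⋃_{p=1}^P I_p} S(f) df ≥ ∫_F S(f) df − ε. -/
open MeasureTheory Set Filter Topology
open scoped ENNReal


lemma my_abscont (S : ℝ → ℝ) (hSint : Integrable S volume) {ε : ℝ} (hε : 0 < ε) :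
    ∃ δ : ℝ, 0 < δ ∧ ∀ B : Set ℝ, volume B ≤ ENNReal.ofReal δ → |∫ x in B, S x| < ε := by
  have h := hSint.tendsto_setIntegral_nhds_zero (l := Filter.comap volume (nhds 0))
      (s := fun B : Set ℝ => B) Filter.tendsto_comap
  have h2 : {B : Set ℝ | |∫ x in B, S x| < ε} ∈ Filter.comap volume (nhds 0) := by
    have := h (Metric.ball_mem_nhds (0:ℝ) hε)
    simpa [Metric.ball, Real.dist_eq] using this
  obtain ⟨t, ht, hsub⟩ := Filter.mem_comap.mp h2
  obtain ⟨i, hi, hIio⟩ := ENNReal.nhds_zero_basis.mem_iff.mp ht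
  obtain ⟨r, -, hr0, hri⟩ := ENNReal.lt_iff_exists_real_btwn.mp hi
  refine ⟨r, ENNReal.ofReal_pos.mp hr0, fun B hB => ?_⟩
  exact hsub (hIio (lt_of_le_of_lt hB hri))


lemma my_exists_slice (F : Set ℝ) (hF : MeasurableSet F) (hFfin : volume F ≠ ⊤)
    {c : ℝ} (hc0 : 0 < c) (hc : ENNReal.ofReal c < volume F) :
    ∃ t : ℝ, volume (F ∩ Set.Iic t) = ENNReal.ofReal c := by
  set g : ℝ → ℝ := fun t => (volume (F ∩ Set.Iic t)).toReal with hg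
  have hfin : ∀ t, volume (F ∩ Set.Iic t) ≠ ⊤ :=
    fun t => ne_top_of_le_ne_top hFfin (measure_mono inter_subset_left)
  have hmono : Monotone fun t : ℝ => F ∩ Set.Iic t :=
    fun s t hst => inter_subset_inter_right F (Set.Iic_subset_Iic.mpr hst)
  have hgmono : Monotone g := fun s t hst =>
    ENNReal.toReal_mono (hfin t) (measure_mono (hmono hst))
  have key : ∀ s t : ℝ, s ≤ t → g t ≤ g s + (t - s) := by
    intro s t hst
    have hsub : F ∩ Set.Iic t ⊆ (F ∩ Set.Iic s) ∪ Set.Ioc s t := by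
      rintro x ⟨hxF, hxt⟩
      rcases le_or_gt x s with h | h
      · exact Or.inl ⟨hxF, h⟩
      · exact Or.inr ⟨h, hxt⟩
    have h1 : volume (F ∩ Set.Iic t) ≤ volume (F ∩ Set.Iic s) + volume (Set.Ioc s t) :=
      (measure_mono hsub).trans (measure_union_le _ _)
    have h2 := ENNReal.toReal_mono (by
      exact ENNReal.add_ne_top.mpr ⟨hfin s, by simp [Real.volume_Ioc]⟩) h1
    rw [ENNReal.toReal_add (hfin s) (by simp [Real.volume_Ioc]), Real.volume_Ioc,
      ENNReal.toReal_ofReal (by linarith)] at h2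
    exact h2
  have hlip : LipschitzWith 1 g := by
    apply LipschitzWith.of_dist_le_mul
    intro x y
    rw [NNReal.coe_one, one_mul, Real.dist_eq, Real.dist_eq]
    rcases le_total x y with h | h
    · rw [abs_sub_comm (g x), abs_of_nonneg (sub_nonneg.mpr (hgmono h)), abs_sub_comm x,
        abs_of_nonneg (sub_nonneg.mpr h)]
      linarith [key x y h]
    · rw [abs_of_nonneg (sub_nonneg.mpr (hgmono h)), abs_of_nonneg (sub_nonneg.mpr h)]
      linarith [key y x h]
  have htop : Tendsto g atTop (𝓝 (volume F).toReal) := by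
    have h1 : Tendsto (fun t : ℝ => volume (F ∩ Set.Iic t)) atTop (𝓝 (volume F)) := by
      have := tendsto_measure_iUnion_atTop (μ := volume) hmono
      rwa [← Set.inter_iUnion, Set.iUnion_Iic, Set.inter_univ] at this
    exact (ENNReal.tendsto_toReal hFfin).comp h1
  have hbot : Tendsto g atBot (𝓝 0) := by
    have hempty : ⋂ t : ℝ, F ∩ Set.Iic t = ∅ := by
      ext x
      simp only [Set.mem_iInter, Set.mem_inter_iff, Set.mem_Iic, Set.mem_empty_iff_false,
        iff_false, not_forall]
      exact ⟨x - 1, fun h => by linarith [h.2]⟩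
    have h1 : Tendsto (fun t : ℝ => volume (F ∩ Set.Iic t)) atBot (𝓝 0) := by
      have := tendsto_measure_iInter_atBot (μ := volume)
        (fun t => (hF.inter measurableSet_Iic).nullMeasurableSet) hmono ⟨0, hfin 0⟩
      rwa [hempty, measure_empty] at this
    simpa [hg, Function.comp_def] using (ENNReal.tendsto_toReal (by simp)).comp h1
  have hclt : c < (volume F).toReal := by
    have := ENNReal.toReal_lt_toReal ENNReal.ofReal_ne_top hFfin |>.mpr hc
    rwa [ENNReal.toReal_ofReal hc0.le] at this
  obtain ⟨t₁, ht₁⟩ := (htop.eventually (eventually_gt_nhds hclt)).exists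
  obtain ⟨t₀', ht₀'⟩ := (hbot.eventually (eventually_lt_nhds hc0)).exists
  set t₀ := min t₀' t₁ with ht₀def
  have hge : g t₀ ≤ g t₀' := hgmono (min_le_left _ _)
  have hmem : c ∈ Set.Icc (g t₀) (g t₁) := ⟨by linarith, ht₁.le⟩
  obtain ⟨t, -, htc⟩ := intermediate_value_Icc (min_le_right t₀' t₁) hlip.continuous.continuousOn hmem
  refine ⟨t, ?_⟩
  rw [← ENNReal.ofReal_toReal (hfin t)]
  exact congrArg ENNReal.ofReal htc


lemma my_cells_disjoint {L : ℝ} (hL : 0 < L) {k k' : ℤ} (h : k ≠ k') :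
    Disjoint (Set.Ico ((k:ℝ)*L) ((k:ℝ)*L + L)) (Set.Ico ((k':ℝ)*L) ((k':ℝ)*L + L)) := by
  rw [Set.Ico_disjoint_Ico]
  rcases h.lt_or_gt with h | h
  · have h1 : (k:ℝ) + 1 ≤ (k':ℝ) := by exact_mod_cast h
    have : (k:ℝ)*L + L ≤ (k':ℝ)*L := by nlinarith
    exact le_trans (min_le_left _ _) (this.trans (le_max_right _ _))
  · have h1 : (k':ℝ) + 1 ≤ (k:ℝ) := by exact_mod_cast h
    have : (k':ℝ)*L + L ≤ (k:ℝ)*L := by nlinarith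
    exact le_trans (min_le_right _ _) (this.trans (le_max_left _ _))

lemma my_mem_cell {L : ℝ} (hL : 0 < L) (x : ℝ) :
    x ∈ Set.Ico ((⌊x / L⌋ : ℝ) * L) ((⌊x / L⌋ : ℝ) * L + L) := by
  constructor
  · exact (le_div_iff₀ hL).mp (Int.floor_le (x / L))
  · have h := (div_lt_iff₀ hL).mp (Int.lt_floor_add_one (x / L))
    nlinarith

/-- The covering claim underlying Theorems 10 and 12: any measurable set `F` of Lebesgue
measure at most `fs` carrying spectral mass `∫_F S` can be approximated, up to `ε`, by
the union of `P` pairwise disjoint intervals of length `fs / P` (the supports of `P`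
ideal band-pass pre-sampling filters). -/
theorem exists_intervals_approximating_spectral_mass
    (S : ℝ → ℝ) (hS0 : ∀ f, 0 ≤ S f) (hSint : Integrable S volume)
    (fs : ℝ) (hfs : 0 < fs)
    (F : Set ℝ) (hF : MeasurableSet F) (hFvol : volume F ≤ ENNReal.ofReal fs)
    (ε : ℝ) (hε : 0 < ε) :
    ∃ (P : ℕ) (_ : 0 < P) (a : Fin P → ℝ),
      (∀ p q : Fin P, p ≠ q →
          Disjoint (Set.Ico (a p) (a p + fs / P)) (Set.Ico (a q) (a q + fs / P))) ∧
      (∫ f in ⋃ p : Fin P, Set.Ico (a p) (a p + fs / P), S f ∂volume)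
        ≥ (∫ f in F, S f ∂volume) - ε := by
  obtain ⟨δ, hδ0, hδ⟩ := my_abscont S hSint (half_pos hε)
  set θ : ℝ := min δ fs / 2 with hθdef
  have hθ0 : 0 < θ := by
    have := lt_min hδ0 hfs
    positivity
  have hθδ : θ ≤ δ := by
    have := min_le_left δ fs; simp only [hθdef]; linarith
  have hθfs : θ ≤ fs / 2 := by
    have := min_le_right δ fs; simp only [hθdef]; linarith
  by_cases hcase : volume F ≤ ENNReal.ofReal θ
  · -- trivial case: F has tiny measure, hence tiny integral
    have hsmall : |∫ x in F, S x| < ε / 2 :=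
      hδ F (hcase.trans (ENNReal.ofReal_le_ofReal hθδ))
    refine ⟨1, one_pos, fun _ => 0, fun p q hpq => absurd (Subsingleton.elim p q) hpq, ?_⟩
    have h1 : (0:ℝ) ≤ ∫ f in ⋃ _ : Fin 1, Set.Ico (0:ℝ) (0 + fs / (1:ℕ)), S f :=
      setIntegral_nonneg (by measurability) fun x _ => hS0 x
    have h2 : ∫ x in F, S x ≤ |∫ x in F, S x| := le_abs_self _
    linarith
  · push_neg at hcase
    have hFfin : volume F ≠ ⊤ := ne_top_of_le_ne_top ENNReal.ofReal_ne_top hFvol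
    obtain ⟨t, hAvol⟩ := my_exists_slice F hF hFfin hθ0 hcase
    set A : Set ℝ := F ∩ Set.Iic t with hAdef
    have hA : MeasurableSet A := hF.inter measurableSet_Iic
    have hAF : A ⊆ F := inter_subset_left
    have hAfin : volume A ≠ ⊤ := by rw [hAvol]; exact ENNReal.ofReal_ne_top
    set F' : Set ℝ := F \ A with hF'def
    have hF' : MeasurableSet F' := hF.diff hA
    have hF'fin : volume F' ≠ ⊤ := ne_top_of_le_ne_top hFfin (measure_mono diff_subset)
    have hF'le : volume F' ≤ ENNReal.ofReal (fs - θ) := by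
      rw [hF'def, measure_diff hAF hA.nullMeasurableSet hAfin, hAvol,
        ENNReal.ofReal_sub _ hθ0.le]
      exact tsub_le_tsub_right hFvol _
    -- compact approximation
    obtain ⟨K, hKF', hKcomp, hKlt⟩ := hF'.exists_isCompact_lt_add hF'fin
      (ε := ENNReal.ofReal θ) (ENNReal.ofReal_pos.mpr hθ0).ne'
    have hKmeas : MeasurableSet K := hKcomp.isClosed.measurableSet
    have hKfin : volume K ≠ ⊤ := ne_top_of_le_ne_top hF'fin (measure_mono hKF')
    have hKvol : volume K ≤ ENNReal.ofReal (fs - θ) := (measure_mono hKF').trans hF'le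
    have hF'Kvol : volume (F' \ K) ≤ ENNReal.ofReal θ := by
      rw [measure_diff hKF' hKmeas.nullMeasurableSet hKfin]
      exact tsub_le_iff_right.mpr (by rw [add_comm]; exact hKlt.le)
    -- open neighbourhood of small measure
    obtain ⟨U, hKU, hUopen, hUlt⟩ := Set.exists_isOpen_lt_add K hKfin
      (ε := ENNReal.ofReal (θ/2)) (ENNReal.ofReal_pos.mpr (half_pos hθ0)).ne'
    have hUvol : volume U < ENNReal.ofReal (fs - θ/2) := by
      refine hUlt.trans_le ?_
      calc volume K + ENNReal.ofReal (θ/2)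
          ≤ ENNReal.ofReal (fs - θ) + ENNReal.ofReal (θ/2) := add_le_add_left hKvol _
        _ = ENNReal.ofReal (fs - θ/2) := by
            rw [← ENNReal.ofReal_add (by linarith) (by linarith)]; ring_nf
    obtain ⟨r, hr0, hrsub⟩ := hKcomp.exists_thickening_subset_open hUopen hKU
    -- the grid
    set P : ℕ := ⌈fs / r⌉₊ with hPdef
    have hP0 : 0 < P := Nat.ceil_pos.mpr (by positivity)
    have hP0' : (0:ℝ) < (P:ℝ) := by exact_mod_cast hP0
    set L : ℝ := fs / (P:ℝ) with hLdef
    have hL0 : 0 < L := by positivity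
    have hLr : L ≤ r := by
      rw [hLdef, div_le_iff₀ hP0']
      have h1 : fs / r ≤ (P:ℝ) := Nat.le_ceil _
      rw [div_le_iff₀ hr0] at h1
      linarith [h1]
    have hPL : (P:ℝ) * L = fs := by rw [hLdef]; field_simp
    set cell : ℤ → Set ℝ := fun k => Set.Ico ((k:ℝ)*L) ((k:ℝ)*L + L) with hcelldef
    set T : Set ℤ := (fun x => ⌊x / L⌋) '' K with hTdef
    have hTfin : T.Finite := by
      obtain ⟨M, hM⟩ := hKcomp.isBounded.subset_closedBall 0
      refine Set.Finite.subset (Set.finite_Icc ⌊(-M) / L⌋ ⌊M / L⌋) ?_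
      rintro k ⟨x, hxK, rfl⟩
      have hx := hM hxK
      rw [Metric.mem_closedBall, Real.dist_eq, sub_zero, abs_le] at hx
      exact ⟨Int.floor_mono (by gcongr; exact hx.1), Int.floor_mono (by gcongr; exact hx.2)⟩
    set Tf : Finset ℤ := hTfin.toFinset with hTfdef
    have hcellU : ∀ k ∈ Tf, cell k ⊆ U := by
      intro k hk x hx
      rw [hTfdef, Set.Finite.mem_toFinset, hTdef] at hk
      obtain ⟨y, hyK, rfl⟩ := hk
      have hy := my_mem_cell hL0 y
      apply hrsub
      rw [Metric.mem_thickening_iff]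
      refine ⟨y, hyK, ?_⟩
      rw [Real.dist_eq, abs_sub_lt_iff]
      obtain ⟨hx1, hx2⟩ := hx
      obtain ⟨hy1, hy2⟩ := hy
      constructor <;> linarith [hLr]
    have hcard : Tf.card < P := by
      have hdisjcells : (↑Tf : Set ℤ).PairwiseDisjoint cell :=
        fun k _ k' _ h => my_cells_disjoint hL0 h
      have hmeas : volume (⋃ k ∈ Tf, cell k) = Tf.card * ENNReal.ofReal L := by
        rw [measure_biUnion_finset hdisjcells (fun k _ => measurableSet_Ico)]
        simp only [hcelldef, Real.volume_Ico, add_sub_cancel_left]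
        rw [Finset.sum_const, nsmul_eq_mul]
      have hle : volume (⋃ k ∈ Tf, cell k) ≤ volume U :=
        measure_mono (Set.iUnion₂_subset hcellU)
      have h1 : (Tf.card : ℝ≥0∞) * ENNReal.ofReal L < (P : ℝ≥0∞) * ENNReal.ofReal L := by
        rw [← hmeas]
        refine (hle.trans_lt hUvol).trans ?_
        calc ENNReal.ofReal (fs - θ/2) < ENNReal.ofReal fs :=
              ENNReal.ofReal_lt_ofReal_iff hfs |>.mpr (by linarith)
          _ = (P : ℝ≥0∞) * ENNReal.ofReal L := by
              rw [← hPL, ENNReal.ofReal_mul (by positivity), ENNReal.ofReal_natCast]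
      have : (Tf.card : ℝ≥0∞) < (P : ℝ≥0∞) := lt_of_not_ge fun h => h1.not_ge (by gcongr)
      exact_mod_cast this
    obtain ⟨Tf', hTsub, hTcard⟩ := Infinite.exists_superset_card_eq Tf P hcard.le
    set e : Fin P → {x // x ∈ Tf'} := fun p => Tf'.equivFin.symm (finCongr hTcard.symm p)
      with hedef
    have heinj : Function.Injective fun p => ((e p : ℤ)) := by
      intro p q h
      have := Subtype.coe_injective h
      have := Tf'.equivFin.symm.injective this
      simpa using (finCongr hTcard.symm).injective this
    set a : Fin P → ℝ := fun p => ((e p : ℤ) : ℝ) * L with hadef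
    refine ⟨P, hP0, a, ?_, ?_⟩
    · intro p q hpq
      rw [← hLdef]
      exact my_cells_disjoint hL0 (fun h => hpq (heinj h))
    · rw [← hLdef]
      -- K is covered by the chosen intervals
      have hKcover : K ⊆ ⋃ p : Fin P, Set.Ico (a p) (a p + L) := by
        intro x hxK
        have hmemT : ⌊x / L⌋ ∈ Tf' := hTsub (by
          rw [hTfdef, Set.Finite.mem_toFinset, hTdef]; exact ⟨x, hxK, rfl⟩)
        refine Set.mem_iUnion.mpr ⟨finCongr hTcard (Tf'.equivFin ⟨⌊x / L⌋, hmemT⟩), ?_⟩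
        have he : (e (finCongr hTcard (Tf'.equivFin ⟨⌊x / L⌋, hmemT⟩)) : ℤ) = ⌊x / L⌋ := by
          simp [hedef]
        rw [hadef]
        simp only [he]
        exact my_mem_cell hL0 x
      -- integral estimates
      have hIunion : IntegrableOn S (⋃ p : Fin P, Set.Ico (a p) (a p + L)) volume :=
        hSint.integrableOn
      have hnn : 0 ≤ᵐ[volume.restrict (⋃ p : Fin P, Set.Ico (a p) (a p + L))] S :=
        Filter.Eventually.of_forall hS0
      have hKle : ∫ x in K, S x ≤ ∫ x in ⋃ p : Fin P, Set.Ico (a p) (a p + L), S x :=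
        setIntegral_mono_set hIunion hnn (HasSubset.Subset.eventuallyLE hKcover)
      have hsplitF : ∫ x in F, S x = (∫ x in F', S x) + ∫ x in A, S x := by
        rw [← setIntegral_union disjoint_sdiff_left hA hSint.integrableOn hSint.integrableOn,
          Set.diff_union_of_subset hAF]
      have hsplitF' : ∫ x in F', S x = (∫ x in K, S x) + ∫ x in F' \ K, S x := by
        rw [← setIntegral_union disjoint_sdiff_right (hF'.diff hKmeas) hSint.integrableOn
          hSint.integrableOn, Set.union_diff_cancel hKF']
      have hAsmall : |∫ x in A, S x| < ε / 2 :=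
        hδ A (by rw [hAvol]; exact ENNReal.ofReal_le_ofReal hθδ)
      have hF'Ksmall : |∫ x in F' \ K, S x| < ε / 2 :=
        hδ (F' \ K) (hF'Kvol.trans (ENNReal.ofReal_le_ofReal hθδ))
      have h1 := le_abs_self (∫ x in A, S x)
      have h2 := le_abs_self (∫ x in F' \ K, S x)
      rw [ge_iff_le, hsplitF, hsplitF']
      linarith
end

section
/- Let M ≥ 1 and let S₁, …, S_M : ℝ → [0, ∞) be measurable functions, each integrable on [−1/2, 1/2]. Let θ > 0 and θ₁, …, θ_M > 0 be such that for every m = 1, …, M, ∫_{−1/2}^{1/2} max(log(S_m(φ)/θ_m), 0) dφ = ∫_{−1/2}^{1/2} max(log((Σ_{j=1}^M S_j(φ))/θ), 0) dφ, and these integrals are finite. Then Σ_{m=1}^M ∫_{−1/2}^{1/2} min(S_m(φ), θ_m) dφ ≤ ∫_{−1/2}^{1/2} min(Σ_{m=1}^M S_m(φ), θ) dφ. -/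
open MeasureTheory
open scoped BigOperators

private lemma aux_min_eq (s t : ℝ) (hs : 0 ≤ s) (ht : 0 < t) :
    min s t = s * Real.exp (-(max (Real.log (s / t)) 0)) := by
  rcases eq_or_lt_of_le hs with h | hs
  · simp [← h, min_eq_left ht.le]
  · rcases le_or_gt s t with hst | hst
    · have h0 : Real.log (s / t) ≤ 0 :=
        Real.log_nonpos (by positivity) (div_le_one_of_le₀ hst ht.le)
      rw [max_eq_right h0, min_eq_left hst]; simp
    · have h1 : max (Real.log (s / t)) 0 = Real.log (s / t) :=
        max_eq_left (Real.log_nonneg (by rw [le_div_iff₀ ht]; linarith))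
      rw [h1, min_eq_right hst.le, Real.exp_neg, Real.exp_log (by positivity)]
      field_simp

private lemma aux_opt (s t ℓ : ℝ) (hs : 0 ≤ s) (ht : 0 < t) (hℓ : 0 ≤ ℓ) :
    min s t ≤ s * Real.exp (-ℓ) + t * (ℓ - max (Real.log (s / t)) 0) := by
  set L := max (Real.log (s / t)) 0 with hLdef
  have hL0 : 0 ≤ L := le_max_right _ _
  have hmin : min s t = s * Real.exp (-L) := aux_min_eq s t hs ht
  have hexp : Real.exp (-L) * (1 + (L - ℓ)) ≤ Real.exp (-ℓ) := by
    have h1 : (L - ℓ) + 1 ≤ Real.exp (L - ℓ) := Real.add_one_le_exp _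
    have h2 : Real.exp (-L) * (1 + (L - ℓ)) ≤ Real.exp (-L) * Real.exp (L - ℓ) := by
      have := Real.exp_pos (-L)
      nlinarith
    have h3 : Real.exp (-L) * Real.exp (L - ℓ) = Real.exp (-ℓ) := by
      rw [← Real.exp_add]; ring_nf
    linarith
  have hsexp : s * (Real.exp (-L) * (1 + (L - ℓ))) ≤ s * Real.exp (-ℓ) :=
    mul_le_mul_of_nonneg_left hexp hs
  rcases le_or_gt L ℓ with hcase | hcase
  · have h1 : s * Real.exp (-L) ≤ t := by rw [← hmin]; exact min_le_right _ _
    nlinarith [hsexp, h1, hmin]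
  · have hLpos : 0 < L := lt_of_le_of_lt hℓ hcase
    have hlogpos : 0 < Real.log (s / t) := by
      by_contra h
      push_neg at h
      rw [hLdef] at hLpos
      rw [max_eq_right h] at hLpos
      exact lt_irrefl 0 hLpos
    have hst : t < s := by
      have h1 : 1 < s / t := by
        by_contra h
        push_neg at h
        exact absurd (Real.log_nonpos (by positivity) h) (not_le.mpr hlogpos)
      calc t = 1 * t := (one_mul t).symm
        _ < (s / t) * t := by exact mul_lt_mul_of_pos_right h1 ht
        _ = s := by field_simp
    have hset : s * Real.exp (-L) = t := by rw [← hmin, min_eq_right hst.le]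
    have : min s t = t := min_eq_right hst.le
    nlinarith [hsexp, hset]

/-- The integral inequality of Example 3: if the per-component water levels `θm` and the
joint water level `θ` correspond to the same rate under reverse waterfilling, then the
sum of the per-component waterfilling distortions is at most the joint one. -/
theorem sum_waterfilling_le_joint_waterfilling
    (M : ℕ) (hM : 1 ≤ M)
    (S : Fin M → ℝ → ℝ) (hS0 : ∀ m f, 0 ≤ S m f)
    (hSmeas : ∀ m, Measurable (S m))
    (hSint : ∀ m, IntegrableOn (S m) (Set.Icc (-(1 / 2) : ℝ) (1 / 2)) volume)
    (θ : ℝ) (hθ : 0 < θ) (θm : Fin M → ℝ) (hθm : ∀ m, 0 < θm m)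
    (hintm : ∀ m, IntegrableOn (fun φ => max (Real.log (S m φ / θm m)) 0)
      (Set.Icc (-(1 / 2) : ℝ) (1 / 2)) volume)
    (hintsum : IntegrableOn (fun φ => max (Real.log ((∑ j, S j φ) / θ)) 0)
      (Set.Icc (-(1 / 2) : ℝ) (1 / 2)) volume)
    (hrate : ∀ m, ∫ φ in Set.Icc (-(1 / 2) : ℝ) (1 / 2), max (Real.log (S m φ / θm m)) 0
      = ∫ φ in Set.Icc (-(1 / 2) : ℝ) (1 / 2), max (Real.log ((∑ j, S j φ) / θ)) 0) :
    (∑ m, ∫ φ in Set.Icc (-(1 / 2) : ℝ) (1 / 2), min (S m φ) (θm m))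
      ≤ ∫ φ in Set.Icc (-(1 / 2) : ℝ) (1 / 2), min (∑ m, S m φ) θ := by
  set I : Set ℝ := Set.Icc (-(1 / 2) : ℝ) (1 / 2) with hIdef
  have hT0 : ∀ φ, 0 ≤ ∑ j, S j φ := fun φ => Finset.sum_nonneg fun j _ => hS0 j φ
  have hTmeas : Measurable (fun φ => ∑ j, S j φ) :=
    Finset.measurable_sum _ fun j _ => hSmeas j
  set L : ℝ → ℝ := fun φ => max (Real.log ((∑ j, S j φ) / θ)) 0 with hLdef
  have hLmeas : Measurable L :=
    (Real.measurable_log.comp (hTmeas.div_const θ)).max measurable_const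
  have hL0 : ∀ φ, 0 ≤ L φ := fun φ => le_max_right _ _
  have hexpL : ∀ φ, Real.exp (-(L φ)) ≤ 1 := fun φ =>
    Real.exp_le_one_iff.mpr (neg_nonpos.mpr (hL0 φ))
  have hgint : ∀ m, IntegrableOn (fun φ => S m φ * Real.exp (-(L φ))) I volume := by
    intro m
    refine Integrable.mono (hSint m)
      ((hSmeas m).mul (Real.measurable_exp.comp hLmeas.neg)).aestronglyMeasurable ?_
    filter_upwards with φ
    rw [Real.norm_eq_abs, Real.norm_eq_abs, abs_of_nonneg (hS0 m φ),
      abs_of_nonneg (mul_nonneg (hS0 m φ) (Real.exp_nonneg _))]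
    exact mul_le_of_le_one_right (hS0 m φ) (hexpL φ)
  have hminint : ∀ m, IntegrableOn (fun φ => min (S m φ) (θm m)) I volume := by
    intro m
    refine Integrable.mono (hSint m)
      ((hSmeas m).min measurable_const).aestronglyMeasurable ?_
    filter_upwards with φ
    rw [Real.norm_eq_abs, Real.norm_eq_abs, abs_of_nonneg (hS0 m φ),
      abs_of_nonneg (le_min (hS0 m φ) (hθm m).le)]
    exact min_le_left _ _
  have key : ∀ m, (∫ φ in I, min (S m φ) (θm m))
      ≤ ∫ φ in I, S m φ * Real.exp (-(L φ)) := by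
    intro m
    have hdiffint : IntegrableOn
        (fun φ => θm m * (L φ - max (Real.log (S m φ / θm m)) 0)) I volume :=
      (hintsum.sub (hintm m)).const_mul (θm m)
    have h1 : (∫ φ in I, min (S m φ) (θm m))
        ≤ ∫ φ in I, (S m φ * Real.exp (-(L φ))
            + θm m * (L φ - max (Real.log (S m φ / θm m)) 0)) := by
      refine integral_mono (hminint m) ((hgint m).add hdiffint) ?_
      intro φ
      have := aux_opt (S m φ) (θm m) (L φ) (hS0 m φ) (hθm m) (hL0 φ)
      simpa [mul_sub, mul_comm] using this
    have h2 : (∫ φ in I, (S m φ * Real.exp (-(L φ))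
            + θm m * (L φ - max (Real.log (S m φ / θm m)) 0)))
        = (∫ φ in I, S m φ * Real.exp (-(L φ)))
          + θm m * ((∫ φ in I, L φ)
            - ∫ φ in I, max (Real.log (S m φ / θm m)) 0) := by
      rw [integral_add (hgint m) hdiffint, integral_const_mul,
        integral_sub hintsum (hintm m)]
    have h3 : (∫ φ in I, L φ) = ∫ φ in I, max (Real.log (S m φ / θm m)) 0 :=
      (hrate m).symm
    rw [h2, h3] at h1
    simpa using h1
  calc (∑ m, ∫ φ in I, min (S m φ) (θm m))
      ≤ ∑ m, ∫ φ in I, S m φ * Real.exp (-(L φ)) :=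
        Finset.sum_le_sum fun m _ => key m
    _ = ∫ φ in I, ∑ m, S m φ * Real.exp (-(L φ)) :=
        (integral_finset_sum _ fun m _ => hgint m).symm
    _ = ∫ φ in I, min (∑ m, S m φ) θ := by
        refine integral_congr_ae (Filter.Eventually.of_forall fun φ => ?_)
        show ∑ m, S m φ * Real.exp (-(L φ)) = min (∑ m, S m φ) θ
        rw [← Finset.sum_mul]
        exact (aux_min_eq _ θ (hT0 φ) hθ).symm
end
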